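/- Let F(s) = ∫₀^π cos θ / (2(1 − cos θ) + s)^(1/2) dθ for s > 0. Then F is strictly positive and strictly decreasing on (0, ∞). -/

import Mathlib

open Real intervalIntegral

private lemma key_ineq (a b s t : ℝ) (ha : 0 < a) (hab : a < b) (hs : 0 < s) (hst : s < t) :
    1/Real.sqrt (a+t) - 1/Real.sqrt (b+t) < 1/Real.sqrt (a+s) - 1/Real.sqrt (b+s) := by
  have hu : 0 < Real.sqrt (a+s) := Real.sqrt_pos.2 (by linarith)
  have hv : 0 < Real.sqrt (a+t) := Real.sqrt_pos.2 (by linarith)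
  have hp : 0 < Real.sqrt (b+s) := Real.sqrt_pos.2 (by linarith)
  have hq : 0 < Real.sqrt (b+t) := Real.sqrt_pos.2 (by linarith)
  have huv : Real.sqrt (a+s) < Real.sqrt (a+t) := Real.sqrt_lt_sqrt (by linarith) (by linarith)
  have hup : Real.sqrt (a+s) < Real.sqrt (b+s) := Real.sqrt_lt_sqrt (by linarith) (by linarith)
  have hvq : Real.sqrt (a+t) < Real.sqrt (b+t) := Real.sqrt_lt_sqrt (by linarith) (by linarith)
  have hpq : Real.sqrt (b+s) < Real.sqrt (b+t) := Real.sqrt_lt_sqrt (by linarith) (by linarith)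
  have h1 : Real.sqrt (a+s) ^ 2 = a + s := Real.sq_sqrt (by linarith)
  have h2 : Real.sqrt (a+t) ^ 2 = a + t := Real.sq_sqrt (by linarith)
  have h3 : Real.sqrt (b+s) ^ 2 = b + s := Real.sq_sqrt (by linarith)
  have h4 : Real.sqrt (b+t) ^ 2 = b + t := Real.sq_sqrt (by linarith)
  set u := Real.sqrt (a+s)
  set v := Real.sqrt (a+t)
  set p := Real.sqrt (b+s)
  set q := Real.sqrt (b+t)
  rw [div_sub_div _ _ (ne_of_gt hv) (ne_of_gt hq), div_sub_div _ _ (ne_of_gt hu) (ne_of_gt hp)]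
  rw [div_lt_div_iff₀ (by positivity) (by positivity)]
  have hA : (q-v)*(q+v) = (p-u)*(p+u) := by nlinarith
  have h5 : u*p < v*q := mul_lt_mul huv hpq.le hp hv.le
  have h6 : (p+u)*(u*p) < (q+v)*(v*q) := mul_lt_mul (by linarith) h5.le (mul_pos hu hp) (by positivity)
  have h8 : (q-v)*(u*p) * (q+v) < (p-u)*(v*q) * (q+v) := by
    calc (q-v)*(u*p)*(q+v) = (p-u)*((p+u)*(u*p)) := by linear_combination (u*p)*hA
    _ < (p-u)*((q+v)*(v*q)) := mul_lt_mul_of_pos_left h6 (by linarith)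
    _ = (p-u)*(v*q)*(q+v) := by ring
  have h9 := lt_of_mul_lt_mul_right h8 (by positivity : (0:ℝ) ≤ q+v)
  nlinarith [h9]

private lemma denom_pos (s : ℝ) (hs : 0 < s) (θ : ℝ) : 0 < 2 * (1 - Real.cos θ) + s := by
  nlinarith [Real.cos_le_one θ]

private lemma cont_f (s : ℝ) (hs : 0 < s) :
    Continuous (fun θ : ℝ => Real.cos θ / Real.sqrt (2 * (1 - Real.cos θ) + s)) := by
  apply Real.continuous_cos.div
  · exact (Real.continuous_sqrt.comp (by continuity))
  · intro θ
    exact ne_of_gt (Real.sqrt_pos.2 (denom_pos s hs θ))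

/-- F s rewritten as an integral over (0, π/2) after folding θ ↦ π − θ. -/
private lemma fold (s : ℝ) (hs : 0 < s) :
    (∫ θ in (0:ℝ)..Real.pi, Real.cos θ / Real.sqrt (2 * (1 - Real.cos θ) + s)) =
    ∫ θ in (0:ℝ)..(Real.pi/2),
      (Real.cos θ / Real.sqrt (2 * (1 - Real.cos θ) + s)
        - Real.cos θ / Real.sqrt (2 * (1 + Real.cos θ) + s)) := by
  set f := fun θ : ℝ => Real.cos θ / Real.sqrt (2 * (1 - Real.cos θ) + s) with hf
  have hc : Continuous f := cont_f s hs
  have h1 : (∫ θ in (0:ℝ)..Real.pi, f θ) =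
      (∫ θ in (0:ℝ)..(Real.pi/2), f θ) + ∫ θ in (Real.pi/2)..Real.pi, f θ :=
    (intervalIntegral.integral_add_adjacent_intervals
      (hc.intervalIntegrable _ _) (hc.intervalIntegrable _ _)).symm
  have h2 : (∫ θ in (Real.pi/2)..Real.pi, f θ) =
      ∫ θ in (0:ℝ)..(Real.pi/2), f (Real.pi - θ) := by
    rw [intervalIntegral.integral_comp_sub_left f Real.pi]
    have e1 : Real.pi - Real.pi/2 = Real.pi/2 := by ring
    rw [e1, sub_zero]
  have h3 : ∀ θ : ℝ, f (Real.pi - θ) = - (Real.cos θ / Real.sqrt (2 * (1 + Real.cos θ) + s)) := by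
    intro θ
    simp only [hf, Real.cos_pi_sub]
    rw [neg_div]
    ring_nf
  have h4 : IntervalIntegrable (fun θ => f (Real.pi - θ)) MeasureTheory.volume 0 (Real.pi/2) :=
    ((hc.comp (by continuity : Continuous fun x : ℝ => Real.pi - x)).intervalIntegrable _ _)
  rw [h1, h2, ← intervalIntegral.integral_add (hc.intervalIntegrable _ _) h4]
  congr 1
  ext θ
  rw [h3 θ]
  ring

private lemma integrand_eq (s θ : ℝ) :
    Real.cos θ / Real.sqrt (2 * (1 - Real.cos θ) + s)
      - Real.cos θ / Real.sqrt (2 * (1 + Real.cos θ) + s)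
    = Real.cos θ * (1 / Real.sqrt (2 * (1 - Real.cos θ) + s)
        - 1 / Real.sqrt (2 * (1 + Real.cos θ) + s)) := by ring

/-- The elliptic-integral kernel
`F(s) = ∫₀^π cos θ / (2(1 − cos θ) + s)^(1/2) dθ`
is strictly positive and strictly decreasing on `(0, ∞)`. -/
theorem stmt_6 :
    (∀ s : ℝ, 0 < s →
      0 < ∫ θ in (0:ℝ)..Real.pi, Real.cos θ / Real.sqrt (2 * (1 - Real.cos θ) + s)) ∧
    StrictAntiOn
      (fun s : ℝ => ∫ θ in (0:ℝ)..Real.pi, Real.cos θ / Real.sqrt (2 * (1 - Real.cos θ) + s))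
      (Set.Ioi 0) := by
  have pi2pos : 0 < Real.pi / 2 := by positivity
  have hgcont : ∀ s : ℝ, 0 < s → Continuous (fun θ : ℝ =>
      Real.cos θ / Real.sqrt (2 * (1 - Real.cos θ) + s)
        - Real.cos θ / Real.sqrt (2 * (1 + Real.cos θ) + s)) := by
    intro s hs
    refine (cont_f s hs).sub ?_
    have := (cont_f s hs).comp (continuous_const.sub continuous_id : Continuous (fun x : ℝ => Real.pi - x))
    refine Real.continuous_cos.div (Real.continuous_sqrt.comp (by continuity)) ?_
    intro θ
    refine ne_of_gt (Real.sqrt_pos.2 ?_)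
    nlinarith [Real.neg_one_le_cos θ]
  constructor
  · intro s hs
    rw [fold s hs]
    apply intervalIntegral.intervalIntegral_pos_of_pos_on
      (((hgcont s hs)).intervalIntegrable _ _) _ pi2pos
    intro θ hθ
    have hcos : 0 < Real.cos θ := Real.cos_pos_of_mem_Ioo
      ⟨by linarith [hθ.1, Real.pi_pos], hθ.2⟩
    have hd1 : 0 < 2 * (1 - Real.cos θ) + s := denom_pos s hs θ
    have hlt : 2 * (1 - Real.cos θ) + s < 2 * (1 + Real.cos θ) + s := by linarith
    have := div_lt_div_of_pos_left hcos (Real.sqrt_pos.2 hd1)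
      (Real.sqrt_lt_sqrt hd1.le hlt)
    linarith
  · intro s hsm t htm hst
    simp only [Set.mem_Ioi] at hsm htm
    have hFs := fold s hsm
    have hFt := fold t htm
    simp only
    rw [hFs, hFt]
    rw [← sub_pos, ← intervalIntegral.integral_sub ((hgcont s hsm).intervalIntegrable _ _)
      ((hgcont t htm).intervalIntegrable _ _)]
    apply intervalIntegral.intervalIntegral_pos_of_pos_on
      (((hgcont s hsm).sub (hgcont t htm)).intervalIntegrable _ _) _ pi2pos
    intro θ hθ
    have hcos : 0 < Real.cos θ := Real.cos_pos_of_mem_Ioo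
      ⟨by linarith [hθ.1, Real.pi_pos], hθ.2⟩
    have hcos1 : Real.cos θ < 1 := by
      have h0 : (0:ℝ) ∈ Set.Icc 0 Real.pi := ⟨le_refl _, Real.pi_pos.le⟩
      have hθ' : θ ∈ Set.Icc 0 Real.pi := ⟨hθ.1.le, by linarith [hθ.2, Real.pi_pos]⟩
      have := Real.strictAntiOn_cos h0 hθ' hθ.1
      simpa using this
    have ha : 0 < 2 * (1 - Real.cos θ) := by linarith
    have hab : 2 * (1 - Real.cos θ) < 2 * (1 + Real.cos θ) := by linarith
    have hk := key_ineq (2 * (1 - Real.cos θ)) (2 * (1 + Real.cos θ)) s t ha hab hsm hst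
    have := mul_lt_mul_of_pos_left hk hcos
    simp only [integrand_eq, Pi.sub_apply]
    linarith [this]
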